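/- Let g:[0,∞)→[0,∞) be continuous with compact support, g(0)=0, g not identically zero, and let ζ>0 be the supremum of the support of g. Fix s₀ ∈ [0,ζ), and for r ≥ 0 let r̄ denote the unique element of [0,ζ) with r − r̄ an integer multiple of ζ. Define g'(s) = g(s₀) + g(“s₀+s”‾) − 2 m_g(s₀, “s₀+s”‾) for s ∈ [0,ζ] and g'(s)=0 for s > ζ. Then g' is continuous with compact support, g'(0)=0, and for every s,t ∈ [0,ζ] one has d_{g'}(s,t) = d_g(“s₀+s”‾, “s₀+t”‾). -/

import Mathlib

open Set Filter NNReal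

/-- `m_g(s,t) = inf { g(r) : s ∧ t ≤ r ≤ s ∨ t }`. -/
noncomputable def mg (g : ℝ≥0 → ℝ) (s t : ℝ≥0) : ℝ :=
  sInf (g '' Set.Icc (min s t) (max s t))

/-- `d_g(s,t) = g(s) + g(t) - 2 m_g(s,t)`. -/
noncomputable def dg (g : ℝ≥0 → ℝ) (s t : ℝ≥0) : ℝ :=
  g s + g t - 2 * mg g s t

section Basic
set_option linter.unusedSectionVars false
variable (g : ℝ≥0 → ℝ)

lemma mg_comm (s t : ℝ≥0) : mg g s t = mg g t s := by
  unfold mg; rw [min_comm, max_comm]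

lemma dg_comm (s t : ℝ≥0) : dg g s t = dg g t s := by
  unfold dg; rw [mg_comm]; ring

lemma mg_of_le {s t : ℝ≥0} (h : s ≤ t) : mg g s t = sInf (g '' Icc s t) := by
  unfold mg; rw [min_eq_left h, max_eq_right h]

lemma img_ne {s t : ℝ≥0} (h : s ≤ t) : (g '' Icc s t).Nonempty :=
  ⟨g s, mem_image_of_mem g (left_mem_Icc.2 h)⟩

variable (hnn : ∀ x, 0 ≤ g x)
include hnn

lemma img_bdd (s t : ℝ≥0) : BddBelow (g '' Icc s t) :=
  ⟨0, by rintro y ⟨x, -, rfl⟩; exact hnn x⟩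

lemma mg_le {s t x : ℝ≥0} (h1 : s ≤ x) (h2 : x ≤ t) : mg g s t ≤ g x := by
  rw [mg_of_le g (h1.trans h2)]
  exact csInf_le (img_bdd g hnn s t) (mem_image_of_mem g ⟨h1, h2⟩)

lemma le_mg {s t : ℝ≥0} {c : ℝ} (h : s ≤ t) (hc : ∀ x ∈ Icc s t, c ≤ g x) :
    c ≤ mg g s t := by
  rw [mg_of_le g h]
  exact le_csInf (img_ne g h) (by rintro y ⟨x, hx, rfl⟩; exact hc x hx)

lemma mg_nonneg (s t : ℝ≥0) : 0 ≤ mg g s t := by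
  rcases le_total s t with h | h
  · exact le_mg g hnn h fun x _ => hnn x
  · rw [mg_comm]; exact le_mg g hnn h fun x _ => hnn x

lemma mg_self (s : ℝ≥0) : mg g s s = g s :=
  le_antisymm (mg_le g hnn le_rfl le_rfl)
    (le_mg g hnn le_rfl (by rintro x ⟨h1, h2⟩; rw [le_antisymm h2 h1]))

lemma mg_split {a b c : ℝ≥0} (hab : a ≤ b) (hbc : b ≤ c) :
    mg g a c = min (mg g a b) (mg g b c) := by
  rw [mg_of_le g (hab.trans hbc), mg_of_le g hab, mg_of_le g hbc,
    ← Icc_union_Icc_eq_Icc hab hbc, image_union]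
  exact csInf_union (img_bdd g hnn a b) (img_ne g hab) (img_bdd g hnn b c) (img_ne g hbc)

lemma mg_zero (b : ℝ≥0) (h0 : g 0 = 0) : mg g 0 b = 0 :=
  le_antisymm (h0 ▸ mg_le g hnn le_rfl (zero_le : 0 ≤ b)) (mg_nonneg g hnn 0 b)

lemma dg_nonneg (s t : ℝ≥0) : 0 ≤ dg g s t := by
  rcases le_total s t with h | h
  · have h1 := mg_le g hnn (le_refl s) h
    have h2 := mg_le g hnn h (le_refl t)
    unfold dg; linarith
  · have h1 := mg_le g hnn h (le_refl s)
    have h2 := mg_le g hnn (le_refl t) h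
    unfold dg; rw [mg_comm]; linarith

omit hnn in
lemma dgimg_bdd (hnn : ∀ x, 0 ≤ g x) (p b c : ℝ≥0) : BddBelow ((fun x => dg g p x) '' Icc b c) :=
  ⟨0, by rintro y ⟨x, -, rfl⟩; exact dg_nonneg g hnn p x⟩

omit hnn in
lemma dgimg_ne (p : ℝ≥0) {b c : ℝ≥0} (h : b ≤ c) : ((fun x => dg g p x) '' Icc b c).Nonempty :=
  ⟨dg g p b, mem_image_of_mem _ (left_mem_Icc.2 h)⟩

variable (hcont : Continuous g)
include hcont

lemma mg_exists {s t : ℝ≥0} (h : s ≤ t) : ∃ ξ ∈ Icc s t, g ξ = mg g s t := by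
  obtain ⟨ξ, hξ, hmin⟩ := isCompact_Icc.exists_isMinOn (nonempty_Icc.2 h) hcont.continuousOn
  refine ⟨ξ, hξ, le_antisymm ?_ (mg_le g hnn hξ.1 hξ.2)⟩
  exact le_mg g hnn h fun x hx => hmin hx

lemma key_right {p b c : ℝ≥0} (hpb : p ≤ b) (hbc : b ≤ c) :
    sInf ((fun x => dg g p x) '' Icc b c) =
      g p + mg g b c - mg g p b - mg g p c := by
  set A := mg g p b with hA
  set B := mg g b c with hB
  have hC : mg g p c = min A B := mg_split g hnn hpb hbc
  apply le_antisymm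
  · -- find a witness point
    rcases le_total A B with hAB | hBA
    · -- minimizer of g on [b,c]
      obtain ⟨ξ, hξ, hgξ⟩ := mg_exists g hnn hcont hbc
      have hbξ : mg g b ξ = B := by
        refine le_antisymm ((mg_le g hnn hξ.1 le_rfl).trans_eq hgξ) ?_
        exact le_mg g hnn hξ.1 fun x hx => mg_le g hnn hx.1 (hx.2.trans hξ.2)
      have hpξ : mg g p ξ = A := by
        rw [mg_split g hnn hpb hξ.1, hbξ, min_eq_left hAB]
      have : dg g p ξ = g p + B - A - min A B := by
        unfold dg; rw [hpξ, hgξ, min_eq_left hAB]; ring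
      rw [hC]
      calc sInf _ ≤ dg g p ξ := csInf_le (dgimg_bdd g hnn p b c) (mem_image_of_mem _ hξ)
        _ = _ := by rw [this]
    · -- first hitting of level A
      set S := {y | y ∈ Icc b c ∧ g y ≤ A} with hS
      have hSne : S.Nonempty := by
        obtain ⟨ξ, hξ, hgξ⟩ := mg_exists g hnn hcont hbc
        exact ⟨ξ, hξ, by rw [hgξ]; exact hBA⟩
      have hScl : IsClosed S :=
        (isClosed_Icc.inter (isClosed_le hcont continuous_const))
      have hxS : sInf S ∈ S := hScl.csInf_mem hSne (OrderBot.bddBelow S)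
      set x := sInf S with hx
      have hbx : b ≤ x := hxS.1.1
      have hxc : x ≤ c := hxS.1.2
      have hlt : ∀ y, b ≤ y → y < x → A < g y := by
        intro y h1 h2
        by_contra hcon
        exact absurd (csInf_le (OrderBot.bddBelow S) ⟨⟨h1, (h2.le.trans hxc)⟩, not_lt.1 hcon⟩)
          (not_le.2 h2)
      have hgx : g x = A := by
        refine le_antisymm hxS.2 ?_
        rcases eq_or_lt_of_le hbx with heq | hblt
        · rw [← heq]; exact mg_le g hnn hpb le_rfl
        · have hcls : Icc b x ⊆ {y | A ≤ g y} := by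
            have : Ico b x ⊆ {y | A ≤ g y} := fun y hy => (hlt y hy.1 hy.2).le
            have h2 : closure (Ico b x) ⊆ {y | A ≤ g y} :=
              closure_minimal this (isClosed_le continuous_const hcont)
            rwa [closure_Ico hblt.ne] at h2
          exact hcls (right_mem_Icc.2 hbx)
      have hbxm : mg g b x = A := by
        refine le_antisymm ((mg_le g hnn hbx le_rfl).trans_eq hgx) ?_
        refine le_mg g hnn hbx fun y hy => ?_
        rcases eq_or_lt_of_le hy.2 with rfl | h2
        · exact hgx.ge
        · exact (hlt y hy.1 h2).le
      have hpxm : mg g p x = A := by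
        rw [mg_split g hnn hpb hbx, hbxm, min_self]
      have hval : dg g p x = g p + B - A - min A B := by
        unfold dg; rw [hpxm, hgx, min_eq_right hBA]; ring
      rw [hC]
      calc sInf _ ≤ dg g p x := csInf_le (dgimg_bdd g hnn p b c) (mem_image_of_mem _ ⟨hbx, hxc⟩)
        _ = _ := by rw [hval]
  · refine le_csInf (dgimg_ne g p hbc) ?_
    rintro y ⟨x, hx, rfl⟩
    show g p + B - A - mg g p c ≤ dg g p x
    have hBx : B ≤ mg g b x := le_mg g hnn hx.1 fun z hz => mg_le g hnn hz.1 (hz.2.trans hx.2)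
    have hxg : mg g b x ≤ g x := mg_le g hnn hx.1 le_rfl
    have hpx : mg g p x = min A (mg g b x) := mg_split g hnn hpb hx.1
    have hdg : dg g p x = g p + g x - 2 * min A (mg g b x) := by unfold dg; rw [hpx]
    rw [hC, hdg]
    rcases le_total A (mg g b x) with h1 | h1 <;> rcases le_total A B with h2 | h2 <;>
      simp [min_eq_left, min_eq_right, h1, h2] <;> linarith

lemma key_left {p b c : ℝ≥0} (hcp : c ≤ p) (hbc : b ≤ c) :
    sInf ((fun x => dg g p x) '' Icc b c) =
      g p + mg g b c - mg g c p - mg g b p := by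
  set A := mg g c p with hA
  set B := mg g b c with hB
  have hC : mg g b p = min B A := mg_split g hnn hbc hcp
  apply le_antisymm
  · rcases le_total A B with hAB | hBA
    · obtain ⟨ξ, hξ, hgξ⟩ := mg_exists g hnn hcont hbc
      have hbξ : mg g ξ c = B := by
        refine le_antisymm ((mg_le g hnn le_rfl hξ.2).trans_eq hgξ) ?_
        exact le_mg g hnn hξ.2 fun x hx => mg_le g hnn (hξ.1.trans hx.1) hx.2
      have hpξ : mg g p ξ = A := by
        rw [mg_comm, mg_split g hnn hξ.2 hcp, hbξ, min_eq_right hAB]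
      have hval : dg g p ξ = g p + B - A - min B A := by
        unfold dg; rw [hpξ, hgξ, min_eq_right hAB]; ring
      rw [hC]
      calc sInf _ ≤ dg g p ξ := csInf_le (dgimg_bdd g hnn p b c) (mem_image_of_mem _ hξ)
        _ = _ := by rw [hval]
    · set S := {y | y ∈ Icc b c ∧ g y ≤ A} with hS
      have hSne : S.Nonempty := by
        obtain ⟨ξ, hξ, hgξ⟩ := mg_exists g hnn hcont hbc
        exact ⟨ξ, hξ, by rw [hgξ]; exact hBA⟩
      have hScl : IsClosed S :=
        (isClosed_Icc.inter (isClosed_le hcont continuous_const))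
      have hSbd : BddAbove S := ⟨c, fun y hy => hy.1.2⟩
      have hxS : sSup S ∈ S := hScl.csSup_mem hSne hSbd
      set x := sSup S with hx
      have hbx : b ≤ x := hxS.1.1
      have hxc : x ≤ c := hxS.1.2
      have hlt : ∀ y, y ≤ c → x < y → A < g y := by
        intro y h1 h2
        by_contra hcon
        exact absurd (le_csSup hSbd ⟨⟨hbx.trans h2.le, h1⟩, not_lt.1 hcon⟩) (not_le.2 h2)
      have hgx : g x = A := by
        refine le_antisymm hxS.2 ?_
        rcases eq_or_lt_of_le hxc with heq | hclt
        · rw [heq]; exact mg_le g hnn le_rfl hcp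
        · have hcls : Icc x c ⊆ {y | A ≤ g y} := by
            have h1 : Ioc x c ⊆ {y | A ≤ g y} := fun y hy => (hlt y hy.2 hy.1).le
            have h2 : closure (Ioc x c) ⊆ {y | A ≤ g y} :=
              closure_minimal h1 (isClosed_le continuous_const hcont)
            rwa [closure_Ioc hclt.ne] at h2
          exact hcls (left_mem_Icc.2 hxc)
      have hbxm : mg g x c = A := by
        refine le_antisymm ((mg_le g hnn le_rfl hxc).trans_eq hgx) ?_
        refine le_mg g hnn hxc fun y hy => ?_
        rcases eq_or_lt_of_le hy.1 with heq | h2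
        · rw [← heq]; exact hgx.ge
        · exact (hlt y hy.2 h2).le
      have hpxm : mg g p x = A := by
        rw [mg_comm, mg_split g hnn hxc hcp, hbxm, min_self]
      have hval : dg g p x = g p + B - A - min B A := by
        unfold dg; rw [hpxm, hgx, min_eq_left hBA]; ring
      rw [hC]
      calc sInf _ ≤ dg g p x := csInf_le (dgimg_bdd g hnn p b c) (mem_image_of_mem _ ⟨hbx, hxc⟩)
        _ = _ := by rw [hval]
  · refine le_csInf (dgimg_ne g p hbc) ?_
    rintro y ⟨x, hx, rfl⟩
    show g p + B - A - mg g b p ≤ dg g p x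
    have hBx : B ≤ mg g x c := le_mg g hnn hx.2 fun z hz => mg_le g hnn (hx.1.trans hz.1) hz.2
    have hxg : mg g x c ≤ g x := mg_le g hnn le_rfl hx.2
    have hpx : mg g p x = min (mg g x c) A := by
      rw [mg_comm]; exact mg_split g hnn hx.2 hcp
    have hdg : dg g p x = g p + g x - 2 * min (mg g x c) A := by unfold dg; rw [hpx]
    rw [hC, hdg]
    rcases le_total A (mg g x c) with h1 | h1 <;> rcases le_total A B with h2 | h2 <;>
      simp [min_eq_left, min_eq_right, h1, h2] <;> linarith

lemma mg_cont (hUC : UniformContinuous g) (p : ℝ≥0) :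
    Continuous fun x => mg g p x := by
  rw [Metric.continuous_iff]
  intro x ε hε
  obtain ⟨δ, hδ, hmod⟩ := Metric.uniformContinuous_iff.mp hUC (ε/2) (by positivity)
  have key : ∀ a b : ℝ≥0, a ≤ b → dist a b < δ → dist (mg g p a) (mg g p b) < ε := by
    intro a b hab hd
    have hco : (a:ℝ) ≤ b := by exact_mod_cast hab
    have hdr : (b:ℝ) - a < δ := by
      rw [NNReal.dist_eq, abs_of_nonpos (by linarith)] at hd; linarith
    rcases le_total b p with hbp | hbp
    · -- a ≤ b ≤ p
      obtain ⟨ξ, hξ, hgξ⟩ := mg_exists g hnn hcont hab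
      have c1 : (a:ℝ) ≤ ξ := by exact_mod_cast hξ.1
      have c2 : (ξ:ℝ) ≤ b := by exact_mod_cast hξ.2
      have h2 : dist (g ξ) (g b) < ε/2 := by
        refine hmod ?_
        rw [NNReal.dist_eq, abs_of_nonpos (by linarith)]; linarith
      have hMa : mg g p a = min (mg g a b) (mg g b p) := by
        rw [mg_comm]; exact mg_split g hnn hab hbp
      have hMb : mg g p b = mg g b p := mg_comm g p b
      have hgb : mg g b p ≤ g b := mg_le g hnn le_rfl hbp
      rw [Real.dist_eq] at h2 ⊢
      have h3 := abs_sub_lt_iff.1 h2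
      rw [hMa, hMb, ← hgξ]
      rcases le_total (g ξ) (mg g b p) with hm | hm
      · rw [min_eq_left hm, abs_of_nonpos (by linarith)]; linarith [h3.2]
      · rw [min_eq_right hm]; simpa using hε
    · rcases le_total p a with hpa | hpa
      · -- p ≤ a ≤ b
        obtain ⟨ξ, hξ, hgξ⟩ := mg_exists g hnn hcont hab
        have c1 : (a:ℝ) ≤ ξ := by exact_mod_cast hξ.1
        have c2 : (ξ:ℝ) ≤ b := by exact_mod_cast hξ.2
        have h2 : dist (g ξ) (g a) < ε/2 := by
          refine hmod ?_
          rw [NNReal.dist_eq, abs_of_nonneg (by linarith)]; linarith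
        have hMb : mg g p b = min (mg g p a) (mg g a b) := mg_split g hnn hpa hab
        have hga : mg g p a ≤ g a := mg_le g hnn hpa le_rfl
        rw [Real.dist_eq] at h2 ⊢
        have h3 := abs_sub_lt_iff.1 h2
        rw [hMb, ← hgξ]
        rcases le_total (mg g p a) (g ξ) with hm | hm
        · rw [min_eq_left hm]; simpa using hε
        · rw [min_eq_right hm, abs_of_nonneg (by linarith)]; linarith [h3.2]
      · -- a ≤ p ≤ b
        have hpb : p ≤ b := hbp
        obtain ⟨ξ₁, hξ₁, hg1⟩ := mg_exists g hnn hcont hpa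
        obtain ⟨ξ₂, hξ₂, hg2⟩ := mg_exists g hnn hcont hpb
        have c0 : (p:ℝ) ≤ b := by exact_mod_cast hpb
        have c0' : (a:ℝ) ≤ p := by exact_mod_cast hpa
        have c1 : (a:ℝ) ≤ ξ₁ := by exact_mod_cast hξ₁.1
        have c2 : (ξ₁:ℝ) ≤ p := by exact_mod_cast hξ₁.2
        have c3 : (p:ℝ) ≤ ξ₂ := by exact_mod_cast hξ₂.1
        have c4 : (ξ₂:ℝ) ≤ b := by exact_mod_cast hξ₂.2
        have h2a : dist (g ξ₁) (g p) < ε/2 := by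
          refine hmod ?_
          rw [NNReal.dist_eq, abs_of_nonpos (by linarith)]; linarith
        have h2b : dist (g ξ₂) (g p) < ε/2 := by
          refine hmod ?_
          rw [NNReal.dist_eq, abs_of_nonneg (by linarith)]; linarith
        have hMa : mg g p a = g ξ₁ := by rw [mg_comm, ← hg1]
        have hMb : mg g p b = g ξ₂ := hg2.symm
        rw [Real.dist_eq] at h2a h2b ⊢
        have h3a := abs_sub_lt_iff.1 h2a
        have h3b := abs_sub_lt_iff.1 h2b
        rw [hMa, hMb]
        exact abs_sub_lt_iff.2 ⟨by linarith [h3a.1, h3b.2], by linarith [h3a.2, h3b.1]⟩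
  refine ⟨δ, hδ, fun y hy => ?_⟩
  rcases le_total y x with h | h
  · exact key y x h hy
  · rw [dist_comm]
    exact key x y h (by rwa [dist_comm] at hy)

end Basic

/-- **Statement 3** (root-changing, Lemma 2.2, first part): with `ζ > 0` the supremum
of the support of `g`, `s₀ ∈ [0,ζ)`, `r̄` the representative of `r` modulo `ζ` in
`[0,ζ)`, and `g'(s) = g(s₀) + g(ov(s₀+s)) - 2 m_g(s₀, ov(s₀+s))` for `s ∈ [0,ζ]`,
`g'(s) = 0` for `s > ζ`: the function `g'` is continuous with compact support,
`g'(0) = 0`, and `d_{g'}(s,t) = d_g(ov(s₀+s), ov(s₀+t))` for `s, t ∈ [0,ζ]`. -/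
theorem stmt3 (g : ℝ≥0 → ℝ) (hcont : Continuous g) (hnn : ∀ x, 0 ≤ g x)
    (hsupp : HasCompactSupport g) (h0 : g 0 = 0) (hne : g ≠ 0)
    (ζ : ℝ≥0) (hζ : ζ = sSup (Function.support g)) (hpos : 0 < ζ)
    (s₀ : ℝ≥0) (hs₀ : s₀ < ζ)
    (ov : ℝ≥0 → ℝ≥0)
    (hov : ∀ r : ℝ≥0, ov r < ζ ∧ ∃ k : ℕ, (r : ℝ) = (ov r : ℝ) + k * (ζ : ℝ))
    (g' : ℝ≥0 → ℝ)
    (hg'₁ : ∀ s : ℝ≥0, s ≤ ζ →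
      g' s = g s₀ + g (ov (s₀ + s)) - 2 * mg g s₀ (ov (s₀ + s)))
    (hg'₂ : ∀ s : ℝ≥0, ζ < s → g' s = 0) :
    Continuous g' ∧ HasCompactSupport g' ∧ g' 0 = 0 ∧
    ∀ s t : ℝ≥0, s ≤ ζ → t ≤ ζ →
      dg g' s t = dg g (ov (s₀ + s)) (ov (s₀ + t)) := by
  have hζR : (0:ℝ) < ζ := hpos
  have hs₀R : (s₀:ℝ) < ζ := hs₀
  -- g vanishes at and beyond ζ
  have hgz : ∀ x : ℝ≥0, ζ ≤ x → g x = 0 := by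
    have hbdd : BddAbove (Function.support g) :=
      hsupp.isCompact.bddAbove.mono (subset_tsupport g)
    have h1 : ∀ x, ζ < x → g x = 0 := by
      intro x hx
      by_contra h
      have hmem : x ∈ Function.support g := h
      have := le_csSup hbdd hmem
      rw [← hζ] at this
      exact absurd this (not_le.2 hx)
    have hζ0 : g ζ = 0 := by
      have hsub : Ioi ζ ⊆ {y | g y = 0} := fun y hy => h1 y hy
      have hcl : closure (Ioi ζ) ⊆ {y | g y = 0} :=
        closure_minimal hsub (isClosed_eq hcont continuous_const)
      rw [closure_Ioi] at hcl
      exact hcl (mem_Ici.2 le_rfl)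
    intro x hx
    rcases eq_or_lt_of_le hx with heq | hlt
    · rw [← heq]; exact hζ0
    · exact h1 x hlt
  have hgζ : g ζ = 0 := hgz ζ le_rfl
  have hsζ : s₀ ≤ ζ := hs₀.le
  set u : ℝ≥0 := ζ - s₀ with hu
  have hsu : s₀ + u = ζ := add_tsub_cancel_of_le hsζ
  have huζ : u ≤ ζ := tsub_le_self
  have hUC : UniformContinuous g := hsupp.uniformContinuous_of_continuous hcont
  -- basic mg values
  have eζ : ∀ a : ℝ≥0, a ≤ ζ → mg g a ζ = 0 := fun a ha =>
    le_antisymm ((mg_le g hnn ha le_rfl).trans_eq hgζ) (mg_nonneg g hnn a ζ)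
  have e0' : ∀ a : ℝ≥0, mg g 0 a = 0 := fun a => mg_zero g hnn a h0
  have e0 : ∀ a : ℝ≥0, mg g a 0 = 0 := fun a => by rw [mg_comm]; exact e0' a
  -- ov facts
  have ov_low : ∀ r : ℝ≥0, r < ζ → ov r = r := by
    intro r hr
    obtain ⟨k, hk⟩ := (hov r).2
    have hoc : (0:ℝ) ≤ ov r := (ov r).coe_nonneg
    have hrc : (r:ℝ) < ζ := hr
    rcases Nat.eq_zero_or_pos k with rfl | hk1
    · apply NNReal.coe_injective; push_cast at hk ⊢; linarith
    · exfalso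
      have hk1' : (1:ℝ) ≤ k := by exact_mod_cast hk1
      nlinarith
  have ov_mid : ∀ r : ℝ≥0, ζ ≤ r → (r:ℝ) < 2*ζ → ov r + ζ = r := by
    intro r h1 h2
    obtain ⟨k, hk⟩ := (hov r).2
    have hoc : (ov r:ℝ) < ζ := (hov r).1
    have hoc0 : (0:ℝ) ≤ ov r := (ov r).coe_nonneg
    have hrc : (ζ:ℝ) ≤ r := h1
    rcases k with _ | k
    · exfalso; push_cast at hk; linarith
    rcases k with _ | k
    · apply NNReal.coe_injective; push_cast at hk ⊢; linarith
    · exfalso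
      push_cast at hk
      have hn : (0:ℝ) ≤ (k:ℝ) := Nat.cast_nonneg k
      nlinarith
  have ov_zeta : ov ζ = 0 := by
    have h1 : ov ζ + ζ = ζ := ov_mid ζ le_rfl (by push_cast; linarith)
    have h2 : ov ζ + ζ = 0 + ζ := by rw [zero_add]; exact h1
    exact add_right_cancel h2
  have ov_hi : ∀ r : ℝ≥0, u ≤ r → r ≤ ζ → ov (s₀ + r) = r - u := by
    intro r h1 h2
    have hge : ζ ≤ s₀ + r := by rw [← hsu]; exact add_le_add (le_refl s₀) h1
    have hc2 : (r:ℝ) ≤ ζ := h2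
    have hlt : ((s₀ + r : ℝ≥0):ℝ) < 2*ζ := by push_cast; linarith
    have hov2 : ov (s₀ + r) + ζ = s₀ + r := ov_mid _ hge hlt
    have h3 : (r - u) + ζ = s₀ + r := by
      calc (r - u) + ζ = (r - u) + (s₀ + u) := by rw [hsu]
        _ = ((r - u) + u) + s₀ := by ring
        _ = r + s₀ := by rw [tsub_add_cancel_of_le h1]
        _ = s₀ + r := add_comm r s₀
    exact add_right_cancel (hov2.trans h3.symm)
  -- formulas for g'
  have hdss : dg g s₀ s₀ = 0 := by unfold dg; rw [mg_self g hnn]; ring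
  have hdgζ : dg g s₀ ζ = g s₀ := by unfold dg; rw [eζ s₀ hsζ, hgζ]; ring
  have hdg0 : dg g s₀ 0 = g s₀ := by unfold dg; rw [e0 s₀, h0]; ring
  have hg'lo : ∀ r : ℝ≥0, r ≤ u → g' r = dg g s₀ (s₀ + r) := by
    intro r hr
    have hrζ : r ≤ ζ := hr.trans huζ
    have hle : s₀ + r ≤ ζ := by rw [← hsu]; exact add_le_add (le_refl s₀) hr
    rcases lt_or_eq_of_le hle with h | h
    · rw [hg'₁ r hrζ, ov_low _ h]; rfl
    · rw [hg'₁ r hrζ, h, ov_zeta, hdgζ, h0, e0 s₀]; ring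
  have hg'hi : ∀ r : ℝ≥0, u ≤ r → r ≤ ζ → g' r = dg g s₀ (r - u) := by
    intro r h1 h2
    rw [hg'₁ r h2, ov_hi r h1 h2]; rfl
  -- continuity
  have hM : Continuous fun x => mg g s₀ x := mg_cont g hnn hcont hUC s₀
  have hD : Continuous fun x => dg g s₀ x := by
    unfold dg; exact (continuous_const.add hcont).sub (continuous_const.mul hM)
  have hgeq : g' = fun r => if r ≤ u then dg g s₀ (s₀ + r)
      else if r ≤ ζ then dg g s₀ (r - u) else 0 := by
    funext r
    split_ifs with h1 h2
    · exact hg'lo r h1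
    · exact hg'hi r (not_le.1 h1).le h2
    · exact hg'₂ r (not_le.1 h2)
  have hcont' : Continuous g' := by
    rw [hgeq]
    have hinner : Continuous fun r : ℝ≥0 => if r ≤ ζ then dg g s₀ (r - u) else 0 := by
      refine Continuous.if_le (hD.comp (continuous_id.sub continuous_const))
        continuous_const continuous_id continuous_const ?_
      intro r hr
      rw [hr, show ζ - u = s₀ from tsub_tsub_cancel_of_le hsζ, hdss]
    refine Continuous.if_le (hD.comp (continuous_const.add continuous_id))
      hinner continuous_id continuous_const ?_
    intro r hr
    rw [hr, if_pos huζ, hsu, tsub_self, hdgζ, hdg0]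
  -- compact support
  have hcs : HasCompactSupport g' := by
    refine HasCompactSupport.intro (isCompact_Icc (a := 0) (b := ζ)) fun x hx => ?_
    refine hg'₂ x ?_
    by_contra h
    exact hx ⟨(zero_le : 0 ≤ x), not_lt.1 h⟩
  -- g' 0 = 0
  have hz : g' 0 = 0 := by rw [hg'lo 0 (zero_le : 0 ≤ u), add_zero, hdss]
  -- the main distance identity
  have main : ∀ s t : ℝ≥0, s ≤ t → t ≤ ζ →
      dg g' s t = dg g (ov (s₀ + s)) (ov (s₀ + t)) := by
    intro s t hst ht
    have hs : s ≤ ζ := hst.trans ht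
    have hmg' : mg g' s t = sInf (g' '' Icc s t) := mg_of_le g' hst
    rcases le_total t u with htu | hut
    · -- both below the wrap point
      have hσt : s₀ + t ≤ ζ := by rw [← hsu]; exact add_le_add (le_refl s₀) htu
      have hσs : s₀ + s ≤ ζ := by
        exact (add_le_add (le_refl s₀) hst).trans hσt
      have hicc : Icc (s₀+s) (s₀+t) = (fun r => s₀ + r) '' Icc s t := by
        rw [show (fun r : ℝ≥0 => s₀ + r) = fun x => x + s₀ from funext fun r => add_comm _ _,
          Set.image_add_const_Icc, add_comm s s₀, add_comm t s₀]
      have him : g' '' Icc s t = (fun x => dg g s₀ x) '' Icc (s₀+s) (s₀+t) := by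
        rw [hicc, image_image]
        exact image_congr fun r hr => hg'lo r (hr.2.trans htu)
      have hmm : mg g' s t =
          g s₀ + mg g (s₀+s) (s₀+t) - mg g s₀ (s₀+s) - mg g s₀ (s₀+t) := by
        rw [hmg', him, key_right g hnn hcont le_self_add (add_le_add (le_refl s₀) hst)]
      have e1 := hg'lo s (hst.trans htu)
      have e2 := hg'lo t htu
      have hd : dg g' s t = dg g (s₀+s) (s₀+t) := by
        simp only [dg] at e1 e2 ⊢
        rw [e1, e2, hmm]; ring
      rw [hd]
      rcases lt_or_eq_of_le hσt with h | h
      · rw [ov_low _ h, ov_low _ (lt_of_le_of_lt (add_le_add (le_refl s₀) hst) h)]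
      · rw [h, ov_zeta]
        have hσs' : s₀ + s ≤ ζ := hσs
        rcases lt_or_eq_of_le hσs' with h2 | h2
        · rw [ov_low _ h2]
          unfold dg
          rw [eζ _ hσs, e0 (s₀+s), hgζ, h0]
        · rw [h2, ov_zeta]
          unfold dg
          rw [mg_self g hnn, mg_self g hnn, h0, hgζ]
    · rcases le_total s u with hsu' | hus
      · -- wrap in the middle : s ≤ u ≤ t
        have hσsζ : s₀ + s ≤ ζ := by rw [← hsu]; exact add_le_add (le_refl s₀) hsu'
        have htu' : t - u ≤ s₀ := by
          rw [tsub_le_iff_right]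
          calc t ≤ ζ := ht
            _ = s₀ + u := hsu.symm
        have hicc1 : Icc (s₀+s) ζ = (fun r => s₀ + r) '' Icc s u := by
          rw [← hsu, show (fun r : ℝ≥0 => s₀ + r) = fun x => x + s₀ from funext fun r => add_comm _ _,
            Set.image_add_const_Icc, add_comm s s₀, add_comm u s₀]
        have hicc2 : Icc (0:ℝ≥0) (t-u) = (fun r => r - u) '' Icc u t := by
          ext y
          constructor
          · rintro ⟨hy0, hy1⟩
            exact ⟨y + u, ⟨le_add_self, (le_tsub_iff_right hut).1 hy1⟩, add_tsub_cancel_right y u⟩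
          · rintro ⟨x, ⟨hx1, hx2⟩, rfl⟩
            exact ⟨zero_le, tsub_le_tsub_right hx2 u⟩
        have him : g' '' Icc s t =
            (fun x => dg g s₀ x) '' Icc (s₀+s) ζ ∪ (fun x => dg g s₀ x) '' Icc 0 (t-u) := by
          rw [← Icc_union_Icc_eq_Icc hsu' hut, image_union]
          congr 1
          · rw [hicc1, image_image]
            exact image_congr fun r hr => hg'lo r hr.2
          · rw [hicc2, image_image]
            exact image_congr fun r hr => hg'hi r hr.1 (hr.2.trans ht)
        have k1 := key_right g hnn hcont (le_self_add : s₀ ≤ s₀ + s) hσsζ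
        have k2 := key_left g hnn hcont htu' (zero_le : 0 ≤ t-u)
        have hmm : mg g' s t =
            min (g s₀ - mg g s₀ (s₀+s)) (g s₀ - mg g (t-u) s₀) := by
          rw [hmg', him,
            csInf_union (dgimg_bdd g hnn _ _ _) (dgimg_ne g _ hσsζ)
              (dgimg_bdd g hnn _ _ _) (dgimg_ne g _ zero_le),
            k1, k2, eζ _ hσsζ, eζ _ hsζ, e0' (t-u), e0' s₀]
          show min _ _ = min _ _
          congr 1 <;> ring
        have e1 := hg'lo s hsu'
        have e2 := hg'hi t hut ht
        have hνt : ov (s₀ + t) = t - u := ov_hi t hut ht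
        have hsplit : mg g (t-u) (s₀+s) = min (mg g (t-u) s₀) (mg g s₀ (s₀+s)) :=
          mg_split g hnn htu' le_self_add
        rcases lt_or_eq_of_le hσsζ with h | h
        · rw [ov_low _ h, hνt]
          simp only [dg] at e1 e2 ⊢
          rw [e1, e2, hmm, mg_comm g (s₀+s) (t-u), hsplit, mg_comm g s₀ (t-u)]
          rcases le_total (mg g s₀ (s₀+s)) (mg g (t-u) s₀) with hc | hc
          · rw [min_eq_right hc, min_eq_right (by linarith)]; ring
          · rw [min_eq_left hc, min_eq_left (by linarith)]; ring
        · rw [h, ov_zeta, hνt]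
          simp only [dg] at e1 e2 ⊢
          rw [e1, e2, hmm, h, e0' (t-u), h0, eζ s₀ hsζ, hgζ, mg_comm g s₀ (t-u)]
          have hA' : 0 ≤ mg g (t-u) s₀ := mg_nonneg g hnn _ _
          rw [min_eq_right (by linarith)]
          ring
      · -- both after the wrap point : u ≤ s
        have hicc : Icc (s-u) (t-u) = (fun r => r - u) '' Icc s t := by
          ext y
          constructor
          · rintro ⟨hy0, hy1⟩
            refine ⟨y + u, ⟨?_, (le_tsub_iff_right (hus.trans hst)).1 hy1⟩,
              add_tsub_cancel_right y u⟩
            exact tsub_le_iff_right.1 hy0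
          · rintro ⟨x, ⟨hx1, hx2⟩, rfl⟩
            exact ⟨tsub_le_tsub_right hx1 u, tsub_le_tsub_right hx2 u⟩
        have him : g' '' Icc s t = (fun x => dg g s₀ x) '' Icc (s-u) (t-u) := by
          rw [hicc, image_image]
          exact image_congr fun r hr => hg'hi r (hus.trans hr.1) (hr.2.trans ht)
        have htu' : t - u ≤ s₀ := by
          rw [tsub_le_iff_right]
          calc t ≤ ζ := ht
            _ = s₀ + u := hsu.symm
        have hmm : mg g' s t =
            g s₀ + mg g (s-u) (t-u) - mg g (t-u) s₀ - mg g (s-u) s₀ := by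
          rw [hmg', him, key_left g hnn hcont htu' (tsub_le_tsub_right hst u)]
        have e1 := hg'hi s hus hs
        have e2 := hg'hi t hut ht
        rw [ov_hi s hus hs, ov_hi t hut ht]
        simp only [dg] at e1 e2 ⊢
        rw [e1, e2, hmm, mg_comm g s₀ (s-u), mg_comm g s₀ (t-u)]
        ring
  refine ⟨hcont', hcs, hz, fun s t hs ht => ?_⟩
  rcases le_total s t with h | h
  · exact main s t h ht
  · rw [dg_comm g', dg_comm g]
    exact main t s h hs
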